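/- Marginal always-taker covariate means: suppose (X, T_w(1), T_w(0)) is independent of Z for each wave w, and Monotonicity, IMCO, and absorbing treatment hold. Fix a wave w > 1 and suppose P(T_1 = 1, Z = 0) > 0, P(1 ≤ T_w < w, Z = 1) > 0, and P(T_w(1) = T_w(0) ≥ 1) > 0. Then E[X | T_w(1) = T_w(0) ≥ 1] = π_w · E[X | T_1 = 1, Z = 0] + (1 − π_w) · E[X | 1 ≤ T_w < w, Z = 1], where π_w = E[1[T_w = w] | Z = 0] / (E[1[T_w = w] | Z = 0] + E[1[1 ≤ T_w < w] | Z = 1]). -/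

import Mathlib

open MeasureTheory ProbabilityTheory Finset

/-- Conditional mean `E[X | A]`: the expectation of `X` under `P` conditioned on the event `A`. -/
noncomputable def cmean {Ω : Type*} [MeasurableSpace Ω] (P : MeasureTheory.Measure Ω)
    (A : Set Ω) (X : Ω → ℝ) : ℝ :=
  ∫ ω, X ω ∂(P[|A])

lemma cmean_eq {Ω : Type*} [MeasurableSpace Ω] (P : MeasureTheory.Measure Ω)
    (A : Set Ω) (X : Ω → ℝ) :
    cmean P A X = (P A).toReal⁻¹ * ∫ ω in A, X ω ∂P := by
  rw [cmean, ProbabilityTheory.cond, integral_smul_measure, ENNReal.toReal_inv, smul_eq_mul]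

theorem marginal_always_taker_covariate_means
    {Ω : Type*} [MeasurableSpace Ω] (P : MeasureTheory.Measure Ω) [IsProbabilityMeasure P]
    (Z : Ω → ℕ) (hZmeas : Measurable Z) (hZbin : ∀ ω, Z ω ≤ 1)
    (hZpos : 0 < P {ω | Z ω = 1}) (hZlt : P {ω | Z ω = 1} < 1)
    (wbar : ℕ) (hwbar : 1 ≤ wbar)
    (T : ℕ → ℕ → Ω → ℕ) (hTmeas : ∀ w z, Measurable (T w z))
    (hTrange : ∀ w ∈ Set.Icc 1 wbar, ∀ z ≤ 1, ∀ ω, T w z ω ≤ w)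
    (hAbs : ∀ z ≤ 1, ∀ w, 1 ≤ w → w < wbar → ∀ ω,
      (1 ≤ T w z ω → T (w + 1) z ω = T w z ω + 1) ∧
      (T w z ω = 0 → T (w + 1) z ω ≤ 1))
    (X : Ω → ℝ) (hXmeas : Measurable X) (hXint : MeasureTheory.Integrable X P)
    (hIndepX : ∀ w ∈ Set.Icc 1 wbar, IndepFun (fun ω => (X ω, T w 1 ω, T w 0 ω)) Z P)
    (hMono : ∀ w ∈ Set.Icc 1 wbar, ∀ᵐ ω ∂P, T w 0 ω ≤ T w 1 ω)
    (hIMCO : ∀ w ∈ Set.Icc 1 wbar, ∀ᵐ ω ∂P, T w 0 ω < T w 1 ω → T w 1 ω = w)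
    (w : ℕ) (hw2 : 2 ≤ w) (hwle : w ≤ wbar)
    (h1 : 0 < P {ω | T 1 (Z ω) ω = 1 ∧ Z ω = 0})
    (h2 : 0 < P {ω | 1 ≤ T w (Z ω) ω ∧ T w (Z ω) ω < w ∧ Z ω = 1})
    (h3 : 0 < P {ω | T w 1 ω = T w 0 ω ∧ 1 ≤ T w 0 ω})
    (piw : ℝ)
    (hpiw : piw =
      cmean P {ω | Z ω = 0} (fun ω => if T w (Z ω) ω = w then (1 : ℝ) else 0) /
        (cmean P {ω | Z ω = 0} (fun ω => if T w (Z ω) ω = w then (1 : ℝ) else 0)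
          + cmean P {ω | Z ω = 1}
              (fun ω => if 1 ≤ T w (Z ω) ω ∧ T w (Z ω) ω < w then (1 : ℝ) else 0))) :
    cmean P {ω | T w 1 ω = T w 0 ω ∧ 1 ≤ T w 0 ω} X =
      piw * cmean P {ω | T 1 (Z ω) ω = 1 ∧ Z ω = 0} X
        + (1 - piw) * cmean P {ω | 1 ≤ T w (Z ω) ω ∧ T w (Z ω) ω < w ∧ Z ω = 1} X := by
  have hw1 : 1 ≤ w := le_trans one_le_two hw2
  have hwmem : w ∈ Set.Icc 1 wbar := ⟨hw1, hwle⟩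
  set B : Set Ω := {ω | T w 0 ω = w} with hBdef
  set C : Set Ω := {ω | 1 ≤ T w 1 ω ∧ T w 1 ω < w} with hCdef
  set A : Set Ω := {ω | T w 1 ω = T w 0 ω ∧ 1 ≤ T w 0 ω} with hAdef
  have hBm : MeasurableSet B := hTmeas w 0 (measurableSet_singleton w)
  have hCm : MeasurableSet C := hTmeas w 1 (measurableSet_Ico : MeasurableSet (Set.Ico 1 w))
  have hAm : MeasurableSet A :=
    (measurableSet_eq_fun (hTmeas w 1) (hTmeas w 0)).inter (hTmeas w 0 measurableSet_Ici)
  -- absorbing: T 1 0 ω = 1 ↔ T w 0 ω = w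
  have key : ∀ ω, T 1 0 ω = 1 ↔ T w 0 ω = w := by
    intro ω
    have main : ∀ k, 1 ≤ k → k ≤ wbar →
        (T 1 0 ω = 1 → T k 0 ω = k) ∧ (T 1 0 ω = 0 → T k 0 ω + 1 ≤ k) := by
      intro k hk1
      induction k, hk1 using Nat.le_induction with
      | base => exact fun _ => ⟨fun h => h, fun h => by omega⟩
      | succ k hk ih =>
        intro hkle
        have hklt : k < wbar := by omega
        obtain ⟨ih1, ih2⟩ := ih (by omega)
        have habs := hAbs 0 (by norm_num) k hk hklt ω
        constructor
        · intro h
          have hTk := ih1 h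
          have := habs.1 (by omega)
          omega
        · intro h
          have hTk := ih2 h
          by_cases h0 : T k 0 ω = 0
          · have := habs.2 h0; omega
          · have := habs.1 (by omega); omega
    constructor
    · exact (main w hw1 hwle).1
    · intro hww
      have hT1le : T 1 0 ω ≤ 1 := hTrange 1 ⟨le_refl 1, hwbar⟩ 0 (by norm_num) ω
      by_contra hne
      have h0 : T 1 0 ω = 0 := by omega
      have := (main w hw1 hwle).2 h0
      omega
  -- event rewrites
  have hE1 : {ω | T 1 (Z ω) ω = 1 ∧ Z ω = 0} = B ∩ Z ⁻¹' {0} := by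
    ext ω
    simp only [Set.mem_setOf_eq, Set.mem_inter_iff, Set.mem_preimage, Set.mem_singleton_iff,
      hBdef]
    constructor
    · rintro ⟨ha, hz⟩; rw [hz] at ha; exact ⟨(key ω).1 ha, hz⟩
    · rintro ⟨hb, hz⟩; refine ⟨?_, hz⟩; rw [hz]; exact (key ω).2 hb
  have hE2 : {ω | 1 ≤ T w (Z ω) ω ∧ T w (Z ω) ω < w ∧ Z ω = 1} = C ∩ Z ⁻¹' {1} := by
    ext ω
    simp only [Set.mem_setOf_eq, Set.mem_inter_iff, Set.mem_preimage, Set.mem_singleton_iff,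
      hCdef]
    constructor
    · rintro ⟨ha, hb, hz⟩; rw [hz] at ha hb; exact ⟨⟨ha, hb⟩, hz⟩
    · rintro ⟨⟨ha, hb⟩, hz⟩; refine ⟨?_, ?_, hz⟩ <;> rw [hz]
      exacts [ha, hb]
  have hZ0m : MeasurableSet (Z ⁻¹' {0}) := hZmeas (measurableSet_singleton 0)
  have hZ1m : MeasurableSet (Z ⁻¹' {1}) := hZmeas (measurableSet_singleton 1)
  -- independence facts
  have hf := hIndepX w hwmem
  have hsB : MeasurableSet {p : ℝ × ℕ × ℕ | p.2.2 = w} :=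
    measurable_snd.snd (measurableSet_singleton w)
  have hsC : MeasurableSet {p : ℝ × ℕ × ℕ | 1 ≤ p.2.1 ∧ p.2.1 < w} :=
    measurable_snd.fst (measurableSet_Ico : MeasurableSet (Set.Ico 1 w))
  have hPB : P (B ∩ Z ⁻¹' {0}) = P B * P (Z ⁻¹' {0}) :=
    hf.measure_inter_preimage_eq_mul {p : ℝ × ℕ × ℕ | p.2.2 = w} {0} hsB
      (measurableSet_singleton 0)
  have hPC : P (C ∩ Z ⁻¹' {1}) = P C * P (Z ⁻¹' {1}) :=
    hf.measure_inter_preimage_eq_mul {p : ℝ × ℕ × ℕ | 1 ≤ p.2.1 ∧ p.2.1 < w} {1} hsC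
      (measurableSet_singleton 1)
  -- product integrals via independence
  have hmulB : ∫ ω in B ∩ Z ⁻¹' {0}, X ω ∂P
      = (∫ ω in B, X ω ∂P) * (P (Z ⁻¹' {0})).toReal := by
    have hφ : Measurable (fun p : ℝ × ℕ × ℕ => if p.2.2 = w then p.1 else 0) :=
      Measurable.ite hsB measurable_fst measurable_const
    have hψ : Measurable (fun z : ℕ => if z = 0 then (1 : ℝ) else 0) :=
      Measurable.ite (measurableSet_eq) measurable_const measurable_const
    have hcomp := hf.comp hφ hψ
    have he1 : ((fun p : ℝ × ℕ × ℕ => if p.2.2 = w then p.1 else 0)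
        ∘ fun ω => (X ω, T w 1 ω, T w 0 ω)) = B.indicator X := by
      ext ω; simp [Function.comp, Set.indicator_apply, hBdef, Set.mem_setOf_eq]
    have he2 : ((fun z : ℕ => if z = 0 then (1 : ℝ) else 0) ∘ Z)
        = (Z ⁻¹' {0}).indicator (fun _ => (1 : ℝ)) := by
      ext ω; by_cases hz : Z ω = 0 <;> simp [Set.indicator_apply, Set.mem_preimage, hz]
    have hintφ : Integrable ((fun p : ℝ × ℕ × ℕ => if p.2.2 = w then p.1 else 0)
        ∘ fun ω => (X ω, T w 1 ω, T w 0 ω)) P := by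
      rw [he1]; exact hXint.indicator hBm
    have hintψ : Integrable ((fun z : ℕ => if z = 0 then (1 : ℝ) else 0) ∘ Z) P := by
      rw [he2]; exact (integrable_const 1).indicator hZ0m
    have hmain := IndepFun.integral_mul_eq_mul_integral hcomp hintφ.aestronglyMeasurable hintψ.aestronglyMeasurable
    rw [he1, he2] at hmain
    have hprod : (B.indicator X) * ((Z ⁻¹' {0}).indicator (fun _ => (1 : ℝ)))
        = (B ∩ Z ⁻¹' {0}).indicator X := by
      ext ω
      by_cases hb : ω ∈ B <;> by_cases hz : ω ∈ Z ⁻¹' {0} <;>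
        simp [Set.indicator_apply, hb, hz, Set.mem_inter_iff]
    rw [hprod, integral_indicator (hBm.inter hZ0m), integral_indicator hBm] at hmain
    rw [hmain]
    congr 1
    rw [integral_indicator_const (1 : ℝ) hZ0m, smul_eq_mul, mul_one, measureReal_def]
  have hmulC : ∫ ω in C ∩ Z ⁻¹' {1}, X ω ∂P
      = (∫ ω in C, X ω ∂P) * (P (Z ⁻¹' {1})).toReal := by
    have hφ : Measurable (fun p : ℝ × ℕ × ℕ => if 1 ≤ p.2.1 ∧ p.2.1 < w then p.1 else 0) :=
      Measurable.ite hsC measurable_fst measurable_const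
    have hψ : Measurable (fun z : ℕ => if z = 1 then (1 : ℝ) else 0) :=
      Measurable.ite (measurableSet_eq) measurable_const measurable_const
    have hcomp := hf.comp hφ hψ
    have he1 : ((fun p : ℝ × ℕ × ℕ => if 1 ≤ p.2.1 ∧ p.2.1 < w then p.1 else 0)
        ∘ fun ω => (X ω, T w 1 ω, T w 0 ω)) = C.indicator X := by
      ext ω; simp [Function.comp, Set.indicator_apply, hCdef, Set.mem_setOf_eq]
    have he2 : ((fun z : ℕ => if z = 1 then (1 : ℝ) else 0) ∘ Z)
        = (Z ⁻¹' {1}).indicator (fun _ => (1 : ℝ)) := by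
      ext ω; by_cases hz : Z ω = 1 <;> simp [Set.indicator_apply, Set.mem_preimage, hz]
    have hintφ : Integrable ((fun p : ℝ × ℕ × ℕ => if 1 ≤ p.2.1 ∧ p.2.1 < w then p.1 else 0)
        ∘ fun ω => (X ω, T w 1 ω, T w 0 ω)) P := by
      rw [he1]; exact hXint.indicator hCm
    have hintψ : Integrable ((fun z : ℕ => if z = 1 then (1 : ℝ) else 0) ∘ Z) P := by
      rw [he2]; exact (integrable_const 1).indicator hZ1m
    have hmain := IndepFun.integral_mul_eq_mul_integral hcomp hintφ.aestronglyMeasurable hintψ.aestronglyMeasurable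
    rw [he1, he2] at hmain
    have hprod : (C.indicator X) * ((Z ⁻¹' {1}).indicator (fun _ => (1 : ℝ)))
        = (C ∩ Z ⁻¹' {1}).indicator X := by
      ext ω
      by_cases hb : ω ∈ C <;> by_cases hz : ω ∈ Z ⁻¹' {1} <;>
        simp [Set.indicator_apply, hb, hz, Set.mem_inter_iff]
    rw [hprod, integral_indicator (hCm.inter hZ1m), integral_indicator hCm] at hmain
    rw [hmain]
    congr 1
    rw [integral_indicator_const (1 : ℝ) hZ1m, smul_eq_mul, mul_one, measureReal_def]
  -- positivity
  have h1' : 0 < P (B ∩ Z ⁻¹' {0}) := by rwa [hE1] at h1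
  have h2' : 0 < P (C ∩ Z ⁻¹' {1}) := by rwa [hE2] at h2
  have hPBpos : 0 < P B := lt_of_lt_of_le h1' (measure_mono Set.inter_subset_left)
  have hPCpos : 0 < P C := lt_of_lt_of_le h2' (measure_mono Set.inter_subset_left)
  have hpz1pos : 0 < P (Z ⁻¹' {1}) := hZpos
  have hpz0pos : 0 < P (Z ⁻¹' {0}) := by
    have hZ01 : Z ⁻¹' {0} = (Z ⁻¹' {1})ᶜ := by
      ext ω
      have := hZbin ω
      simp only [Set.mem_preimage, Set.mem_singleton_iff, Set.mem_compl_iff, Set.mem_setOf_eq]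
      omega
    rw [hZ01, measure_compl hZ1m (measure_ne_top _ _), measure_univ]
    exact tsub_pos_iff_lt.mpr hZlt
  have hpB : 0 < (P B).toReal := ENNReal.toReal_pos hPBpos.ne' (measure_ne_top _ _)
  have hpC : 0 < (P C).toReal := ENNReal.toReal_pos hPCpos.ne' (measure_ne_top _ _)
  have hpz0 : 0 < (P (Z ⁻¹' {0})).toReal := ENNReal.toReal_pos hpz0pos.ne' (measure_ne_top _ _)
  have hpz1 : 0 < (P (Z ⁻¹' {1})).toReal := ENNReal.toReal_pos hpz1pos.ne' (measure_ne_top _ _)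
  -- a.e. decomposition
  have hae : ∀ᵐ ω ∂P, ((ω ∈ A) ↔ (ω ∈ B ∨ ω ∈ C)) ∧ ¬(ω ∈ B ∧ ω ∈ C) := by
    filter_upwards [hMono w hwmem, hIMCO w hwmem] with ω hm hi
    have ht1 := hTrange w hwmem 1 le_rfl ω
    have ht0 := hTrange w hwmem 0 (by norm_num) ω
    simp only [hAdef, hBdef, hCdef, Set.mem_setOf_eq]
    by_cases hlt : T w 0 ω < T w 1 ω
    · have := hi hlt; omega
    · omega
  have key2 : ∀ g : Ω → ℝ,
      (A.indicator g) =ᵐ[P] fun ω => B.indicator g ω + C.indicator g ω := by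
    intro g
    filter_upwards [hae] with ω hω
    obtain ⟨hiff, hnot⟩ := hω
    by_cases hb : ω ∈ B
    · have ha : ω ∈ A := hiff.2 (Or.inl hb)
      have hc : ω ∉ C := fun hc => hnot ⟨hb, hc⟩
      simp [Set.indicator_apply, ha, hb, hc]
    · by_cases hc : ω ∈ C
      · have ha : ω ∈ A := hiff.2 (Or.inr hc)
        simp [Set.indicator_apply, ha, hb, hc]
      · have ha : ω ∉ A := fun ha => ((hiff.1 ha).elim hb hc)
        simp [Set.indicator_apply, ha, hb, hc]
  have hIA : ∫ ω in A, X ω ∂P = (∫ ω in B, X ω ∂P) + ∫ ω in C, X ω ∂P := by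
    rw [← integral_indicator hAm, integral_congr_ae (key2 X),
      integral_add (hXint.indicator hBm) (hXint.indicator hCm),
      integral_indicator hBm, integral_indicator hCm]
  have hPA : (P A).toReal = (P B).toReal + (P C).toReal := by
    have hh := integral_congr_ae (key2 (fun _ => (1 : ℝ)))
    rw [integral_add ((integrable_const (1 : ℝ)).indicator hBm)
      ((integrable_const (1 : ℝ)).indicator hCm)] at hh
    rw [integral_indicator_const (1 : ℝ) hAm, integral_indicator_const (1 : ℝ) hBm,
      integral_indicator_const (1 : ℝ) hCm, smul_eq_mul, smul_eq_mul, smul_eq_mul,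
      mul_one, mul_one, mul_one] at hh
    exact hh
  -- the pi weights
  have hg0 : cmean P {ω | Z ω = 0} (fun ω => if T w (Z ω) ω = w then (1 : ℝ) else 0)
      = (P B).toReal := by
    have hset : {ω | Z ω = 0} = Z ⁻¹' {0} := rfl
    rw [cmean_eq, hset]
    have heq : ∫ ω in Z ⁻¹' {0}, (if T w (Z ω) ω = w then (1 : ℝ) else 0) ∂P
        = ∫ ω in Z ⁻¹' {0}, B.indicator (fun _ => (1 : ℝ)) ω ∂P := by
      refine setIntegral_congr_fun hZ0m fun ω hω => ?_
      have hz : Z ω = 0 := hω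
      rw [hz]
      simp [Set.indicator_apply, hBdef, Set.mem_setOf_eq]
    rw [heq, setIntegral_indicator hBm, setIntegral_const, Set.inter_comm, measureReal_def, hPB,
      ENNReal.toReal_mul, smul_eq_mul, mul_one]
    field_simp
  have hg1 : cmean P {ω | Z ω = 1}
      (fun ω => if 1 ≤ T w (Z ω) ω ∧ T w (Z ω) ω < w then (1 : ℝ) else 0)
      = (P C).toReal := by
    have hset : {ω | Z ω = 1} = Z ⁻¹' {1} := rfl
    rw [cmean_eq, hset]
    have heq : ∫ ω in Z ⁻¹' {1}, (if 1 ≤ T w (Z ω) ω ∧ T w (Z ω) ω < w then (1 : ℝ) else 0) ∂P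
        = ∫ ω in Z ⁻¹' {1}, C.indicator (fun _ => (1 : ℝ)) ω ∂P := by
      refine setIntegral_congr_fun hZ1m fun ω hω => ?_
      have hz : Z ω = 1 := hω
      rw [hz]
      simp [Set.indicator_apply, hCdef, Set.mem_setOf_eq]
    rw [heq, setIntegral_indicator hCm, setIntegral_const, Set.inter_comm, measureReal_def, hPC,
      ENNReal.toReal_mul, smul_eq_mul, mul_one]
    field_simp
  -- final assembly
  rw [hE1, hE2, cmean_eq, cmean_eq, cmean_eq, hIA, hmulB, hmulC, hPB, hPC,
    ENNReal.toReal_mul, ENNReal.toReal_mul, hPA, hpiw, hg0, hg1]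
  set pB := (P B).toReal
  set pC := (P C).toReal
  set p0 := (P (Z ⁻¹' {0})).toReal
  set p1 := (P (Z ⁻¹' {1})).toReal
  set IB := ∫ ω in B, X ω ∂P
  set IC := ∫ ω in C, X ω ∂P
  have hsum : 0 < pB + pC := by positivity
  field_simp
  ring
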